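/- Theorem (tightness of Perturbed GDA for game stationarity). Let ε ∈ (0,1) and ℓ, D_Y > 0, set r_y := ε/D_Y, α := 1/(4(ℓ + r_y)) and c := r_y²·α/(16ℓ²), and consider the hard GS instance. Run Perturbed GDA on f̃(x,y) = f(x,y) − (r_y/2)y² initialized at x_0 := 2ε/ℓ and y_0 := (2b(1 + ℓc)α/(√(A_1² − 4B_1) + 2ℓc − A_1))·x_0. Assume ε is small enough that 3ℓc < 1, A_1 < 0, A_1² ≥ 4B_1, 2B_1 < −A_1, 0 ≤ x_0 ≤ r_y·D_Y/b and 0 ≤ y_0 ≤ D_Y. Then for every T ∈ ℕ, if (x_T, y_T) is an ε-game-stationary point of min_{x∈ℝ} max_{y∈[0,D_Y]} f(x,y), then (1 + λ_1)^T ≤ 1/2. -/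
import Mathlib


noncomputable section

/-- `b = √(3 ℓ r_y)` in the hard GS instance. -/
def bGS (l ry : ℝ) : ℝ := Real.sqrt (3 * l * ry)

/-- The hard GS instance objective `f`. -/
def fGS (l ry Dy : ℝ) (x y : ℝ) : ℝ :=
  if x < 0 then 0
  else if x ≤ ry * Dy / bGS l ry then -(l / 2) * x ^ 2 + bGS l ry * x * y
  else -(l * ry ^ 2 * Dy ^ 2 / (2 * (bGS l ry) ^ 2)) + ry * Dy * y

/-- Partial derivative of `fGS` in `x`. -/
def fxGS (l ry Dy : ℝ) (x y : ℝ) : ℝ :=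
  if x < 0 then 0
  else if x ≤ ry * Dy / bGS l ry then -l * x + bGS l ry * y
  else 0

/-- Partial derivative of `fGS` in `y`. -/
def fyGS (l ry Dy : ℝ) (x y : ℝ) : ℝ :=
  if x < 0 then 0
  else if x ≤ ry * Dy / bGS l ry then bGS l ry * x
  else ry * Dy

/-- Metric projection of `v` onto the interval `[0, Dy]`. -/
def projI (Dy v : ℝ) : ℝ := max 0 (min Dy v)

/-- `A₁ = ℓc − α r_y (1 + 3ℓc)`. -/
def A1 (l c α ry : ℝ) : ℝ := l * c - α * ry * (1 + 3 * l * c)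

/-- `B₁ = 2 ℓ c α r_y`. -/
def B1 (l c α ry : ℝ) : ℝ := 2 * l * c * α * ry

/-- `λ₁ = (A₁ + √(A₁² − 4B₁))/2`. -/
def lam1 (l c α ry : ℝ) : ℝ :=
  (A1 l c α ry + Real.sqrt ((A1 l c α ry) ^ 2 - 4 * B1 l c α ry)) / 2

/-- `(x, y)` is an `ε`-game-stationary point of
`min_{x ∈ ℝ} max_{y ∈ [0, Dy]} fGS(x,y)`. -/
def IsGS1 (l ry Dy ε x y : ℝ) : Prop :=
  y ∈ Set.Icc 0 Dy ∧
    ∃ u v : ℝ, (∀ s : ℝ, u * (s - x) ≤ 0) ∧ (∀ s ∈ Set.Icc (0 : ℝ) Dy, v * (s - y) ≤ 0) ∧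
      |fxGS l ry Dy x y + u| ≤ ε ∧ |-(fyGS l ry Dy x y) + v| ≤ ε

set_option maxHeartbeats 1000000 in
/-- Tightness of Perturbed GDA for game stationarity on the hard GS instance. -/
theorem perturbed_gda_gs_tightness
    (l Dy ε ry c α : ℝ) (xs ys : ℕ → ℝ)
    (hl : 0 < l) (hDy : 0 < Dy) (hε : 0 < ε) (hε1 : ε < 1)
    -- parameter choices
    (hry : ry = ε / Dy)
    (hα : α = 1 / (4 * (l + ry)))
    (hc : c = ry ^ 2 * α / (16 * l ^ 2))
    -- smallness assumptions on ε
    (hlc : 3 * l * c < 1)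
    (hA1 : A1 l c α ry < 0)
    (hdisc : (A1 l c α ry) ^ 2 ≥ 4 * B1 l c α ry)
    (hB1 : 2 * B1 l c α ry < -(A1 l c α ry))
    -- initialization along the eigenvector
    (hx0 : xs 0 = 2 * ε / l)
    (hy0 : ys 0 = 2 * bGS l ry * (1 + l * c) * α /
      (Real.sqrt ((A1 l c α ry) ^ 2 - 4 * B1 l c α ry) + 2 * l * c - A1 l c α ry) * xs 0)
    (hx0mem : 0 ≤ xs 0 ∧ xs 0 ≤ ry * Dy / bGS l ry)
    (hy0mem : 0 ≤ ys 0 ∧ ys 0 ≤ Dy)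
    -- Perturbed GDA on f̃(x,y) = f(x,y) − (r_y/2) y²
    (hxrec : ∀ t, xs (t + 1) = xs t - c * fxGS l ry Dy (xs t) (ys t))
    (hyrec : ∀ t, ys (t + 1) =
      projI Dy (ys t + α * (fyGS l ry Dy (xs (t + 1)) (ys t) - ry * ys t))) :
    ∀ T : ℕ, IsGS1 l ry Dy ε (xs T) (ys T) →
      (1 + lam1 l c α ry) ^ T ≤ 1 / 2 := by

  have hryp : 0 < ry := by rw [hry]; positivity
  have hbp : 0 < bGS l ry := Real.sqrt_pos.mpr (by positivity)
  have hb2 : (bGS l ry) ^ 2 = 3 * l * ry := by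
    unfold bGS; exact Real.sq_sqrt (by positivity)
  have hαp : 0 < α := by rw [hα]; positivity
  have hcp : 0 < c := by
    rw [hc]; exact div_pos (mul_pos (pow_pos hryp 2) hαp) (by positivity)
  set A := A1 l c α ry with hA
  set B := B1 l c α ry with hB
  have hAdef : A = l * c - α * ry * (1 + 3 * l * c) := hA
  have hBdef : B = 2 * l * c * α * ry := hB
  have hBp : 0 < B := by rw [hBdef]; positivity
  set D := Real.sqrt (A ^ 2 - 4 * B) with hDdef
  have hD2 : D ^ 2 = A ^ 2 - 4 * B := by
    rw [hDdef]; exact Real.sq_sqrt (by linarith)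
  have hD2' : D ^ 2 = (l * c - α * ry * (1 + 3 * l * c)) ^ 2 - 4 * (2 * l * c * α * ry) := by
    rw [hD2, hAdef, hBdef]
  have hDnn : 0 ≤ D := by rw [hDdef]; exact Real.sqrt_nonneg _
  have hDle : D ≤ -A := by
    rw [hDdef]
    calc Real.sqrt (A ^ 2 - 4 * B) ≤ Real.sqrt (A ^ 2) := Real.sqrt_le_sqrt (by linarith)
      _ = |A| := Real.sqrt_sq_eq_abs A
      _ = -A := abs_of_neg hA1
  set lam := lam1 l c α ry with hlamset
  have hlamdef : lam = (A + D) / 2 := hlamset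
  have hαry : α * ry < 1 / 4 := by
    rw [hα]
    rw [div_mul_eq_mul_div, one_mul, div_lt_iff₀ (by positivity)]
    linarith
  have hApos : -(1 : ℝ) / 2 < A := by
    rw [hAdef]
    have h1 : α * ry * (1 + 3 * l * c) < 1 / 4 * (1 + 3 * l * c) := by
      apply mul_lt_mul_of_pos_right hαry
      linarith [mul_pos hl hcp]
    linarith [mul_pos hl hcp]
  have hmupos : (0 : ℝ) < 1 + lam := by rw [hlamdef]; linarith
  have hlamle : lam ≤ 0 := by rw [hlamdef]; linarith
  have hmule : 1 + lam ≤ 1 := by linarith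
  have hdenom : 0 < D + 2 * l * c - A := by linarith [hDnn, hA1, mul_pos hl hcp]
  set kap := 2 * bGS l ry * (1 + l * c) * α / (D + 2 * l * c - A) with hkap
  have hkapnn : 0 ≤ kap := by
    rw [hkap]; exact div_nonneg (by positivity) (le_of_lt hdenom)
  have poly1 : c * bGS l ry * (2 * bGS l ry * (1 + l * c) * α)
      = (l * c - (A + D) / 2) * (D + 2 * l * c - A) := by
    rw [hAdef]
    linear_combination (2 * c * (1 + l * c) * α) * hb2 + (1 / 2) * hD2'
  have key1 : c * bGS l ry * kap = l * c - lam := by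
    rw [hkap, hlamdef, ← mul_div_assoc, div_eq_iff (ne_of_gt hdenom)]
    linear_combination poly1
  have poly2 : α * bGS l ry * (1 + (A + D) / 2) * (D + 2 * l * c - A)
      = 2 * bGS l ry * (1 + l * c) * α * ((A + D) / 2 + α * ry) := by
    rw [hAdef]
    linear_combination (α * bGS l ry / 2) * hD2'
  have key2 : α * bGS l ry * (1 + lam) = kap * (lam + α * ry) := by
    rw [hkap, hlamdef, div_mul_eq_mul_div, eq_div_iff (ne_of_gt hdenom)]
    linear_combination poly2
  have main : ∀ t, xs t = (1 + lam) ^ t * xs 0 ∧ ys t = kap * xs t := by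
    intro t
    induction t with
    | zero => exact ⟨by simp, hy0⟩
    | succ t ih =>
      obtain ⟨ihx, ihy⟩ := ih
      have hpow0 : 0 ≤ (1 + lam) ^ t := pow_nonneg (le_of_lt hmupos) t
      have hpow1 : (1 + lam) ^ t ≤ 1 := pow_le_one₀ (le_of_lt hmupos) hmule
      have hx0nn := hx0mem.1
      have hxtnn : 0 ≤ xs t := by rw [ihx]; exact mul_nonneg hpow0 hx0nn
      have hxtle : xs t ≤ xs 0 := by
        rw [ihx]; exact mul_le_of_le_one_left hx0nn hpow1
      have hxtle' : xs t ≤ ry * Dy / bGS l ry := le_trans hxtle hx0mem.2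
      have hfx : fxGS l ry Dy (xs t) (ys t) = -l * xs t + bGS l ry * ys t := by
        unfold fxGS; rw [if_neg (not_lt.mpr hxtnn), if_pos hxtle']
      have hxs : xs (t + 1) = (1 + lam) * xs t := by
        rw [hxrec t, hfx, ihy]
        linear_combination (-(xs t)) * key1
      have hxs1 : xs (t + 1) = (1 + lam) ^ (t + 1) * xs 0 := by
        rw [hxs, ihx]; ring
      have hxs1nn : 0 ≤ xs (t + 1) := by
        rw [hxs]; exact mul_nonneg (le_of_lt hmupos) hxtnn
      have hxs1le : xs (t + 1) ≤ xs 0 := by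
        rw [hxs]; exact le_trans (mul_le_of_le_one_left hxtnn hmule) hxtle
      have hfy : fyGS l ry Dy (xs (t + 1)) (ys t) = bGS l ry * xs (t + 1) := by
        unfold fyGS
        rw [if_neg (not_lt.mpr hxs1nn), if_pos (le_trans hxs1le hx0mem.2)]
      have hz : ys t + α * (fyGS l ry Dy (xs (t + 1)) (ys t) - ry * ys t)
          = kap * xs (t + 1) := by
        rw [hfy, ihy, hxs]
        linear_combination (xs t) * key2
      have hzub : kap * xs (t + 1) ≤ Dy := by
        have h1 : kap * xs (t + 1) ≤ kap * xs 0 := mul_le_mul_of_nonneg_left hxs1le hkapnn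
        calc kap * xs (t + 1) ≤ kap * xs 0 := h1
          _ = ys 0 := hy0.symm
          _ ≤ Dy := hy0mem.2
      have hznn : 0 ≤ kap * xs (t + 1) := mul_nonneg hkapnn hxs1nn
      have hys : ys (t + 1) = kap * xs (t + 1) := by
        rw [hyrec t, hz]; unfold projI
        rw [min_eq_right hzub, max_eq_right hznn]
      exact ⟨hxs1, hys⟩
  intro T hGS
  obtain ⟨hxT, hyT⟩ := main T
  obtain ⟨hymem, u, v, hu, hv, hxbd, hybd⟩ := hGS
  have hu0 : u = 0 := by
    have h1 := hu (xs T + u)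
    have h2 : u * u ≤ 0 := by simpa using h1
    exact mul_self_eq_zero.mp (le_antisymm h2 (mul_self_nonneg u))
  have hpow0 : 0 ≤ (1 + lam) ^ T := pow_nonneg (le_of_lt hmupos) T
  have hpow1 : (1 + lam) ^ T ≤ 1 := pow_le_one₀ (le_of_lt hmupos) hmule
  have hxTnn : 0 ≤ xs T := by rw [hxT]; exact mul_nonneg hpow0 hx0mem.1
  have hxTle : xs T ≤ xs 0 := by
    rw [hxT]; exact mul_le_of_le_one_left hx0mem.1 hpow1
  have hfx : fxGS l ry Dy (xs T) (ys T) = -l * xs T + bGS l ry * ys T := by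
    unfold fxGS
    rw [if_neg (not_lt.mpr hxTnn), if_pos (le_trans hxTle hx0mem.2)]
  have hDle' : D ≤ α * ry * (1 + 3 * l * c) - l * c := by
    rw [hAdef] at hDle; linarith
  have hbk : 2 * l ≤ bGS l ry * kap := by
    rw [hkap, ← mul_div_assoc, le_div_iff₀ hdenom]
    have hbb : bGS l ry * (2 * bGS l ry * (1 + l * c) * α) = 6 * l * ry * (1 + l * c) * α := by
      linear_combination (2 * (1 + l * c) * α) * hb2
    rw [hbb, hAdef]
    have p1 := mul_le_mul_of_nonneg_left hDle' (by positivity : (0:ℝ) ≤ 2 * l)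
    have p2 := mul_nonneg (show (0:ℝ) ≤ 2 * l * ry * α by positivity)
      (show (0:ℝ) ≤ 1 - 3 * l * c by linarith)
    linarith [p1, p2]
  have hlow : l * xs T ≤ -l * xs T + bGS l ry * ys T := by
    rw [hyT]
    have h2 : 2 * l * xs T ≤ bGS l ry * kap * xs T :=
      mul_le_mul_of_nonneg_right hbk hxTnn
    linarith [h2]
  rw [hu0, add_zero, hfx] at hxbd
  have habs := abs_le.mp hxbd
  have hfinal : l * xs T ≤ ε := by linarith [habs.2]
  rw [hxT, hx0] at hfinal
  have hl0 : l ≠ 0 := ne_of_gt hl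
  have heq : l * ((1 + lam) ^ T * (2 * ε / l)) = (1 + lam) ^ T * (2 * ε) := by
    field_simp
  have hfinal2 : (1 + lam) ^ T * (2 * ε) ≤ ε := heq ▸ hfinal
  have h2e : (0 : ℝ) < 2 * ε := by positivity
  have h3 : (1 + lam) ^ T ≤ ε / (2 * ε) := (le_div_iff₀ h2e).mpr hfinal2
  rwa [show ε / (2 * ε) = 1 / 2 by
    rw [div_eq_iff (ne_of_gt h2e)]; ring] at h3
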